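/- Let n ≥ 5 and let G be a transitive subgroup of S_n whose order is divisible by a prime q with n/2 < q < n − 2. Then G contains the alternating group A_n. -/

import Mathlib

open Equiv Equiv.Perm Finset

set_option linter.unusedSectionVars false
set_option linter.unreachableTactic false
set_option linter.unusedTactic false
set_option maxHeartbeats 1000000

theorem Equiv.Perm.inv_apply_self {β : Type*} (f : Equiv.Perm β) (x : β) : f⁻¹ (f x) = x :=
  Equiv.symm_apply_apply f x

theorem Equiv.Perm.apply_inv_self {β : Type*} (f : Equiv.Perm β) (x : β) : f (f⁻¹ x) = x :=
  Equiv.apply_symm_apply f x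

namespace Stmt10

variable {α : Type*} [DecidableEq α] [Fintype α]

/-- The 3-cycle `(a b c)` mapping `a ↦ b ↦ c ↦ a`. -/
def c3 (a b c : α) : Equiv.Perm α := Equiv.swap a b * Equiv.swap b c

lemma c3_apply_left {a b c : α} (hab : a ≠ b) (hac : a ≠ c) : c3 a b c a = b := by
  simp [c3, Equiv.swap_apply_of_ne_of_ne hab hac]

lemma c3_apply_mid {a b c : α} (hca : c ≠ a) (hcb : c ≠ b) : c3 a b c b = c := by
  simp [c3, Equiv.swap_apply_of_ne_of_ne hca hcb]

lemma c3_apply_right (a b c : α) : c3 a b c c = a := by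
  simp [c3]

lemma c3_apply_of_ne {a b c x : α} (hxa : x ≠ a) (hxb : x ≠ b) (hxc : x ≠ c) :
    c3 a b c x = x := by
  simp [c3, Equiv.swap_apply_of_ne_of_ne hxb hxc, Equiv.swap_apply_of_ne_of_ne hxa hxb]

lemma c3_conj (g : Perm α) (a b c : α) : g * c3 a b c * g⁻¹ = c3 (g a) (g b) (g c) := by
  simp only [c3, Equiv.swap_apply_apply]
  group

lemma c3_inv (a b c : α) : (c3 a b c)⁻¹ = c3 c b a := by
  rw [c3, c3, mul_inv_rev, Equiv.swap_inv, Equiv.swap_inv, Equiv.swap_comm c b,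
    Equiv.swap_comm b a]

lemma c3_rot {a b c : α} (hab : a ≠ b) (hbc : b ≠ c) (hac : a ≠ c) :
    c3 a b c = c3 c a b := by
  ext x
  rcases eq_or_ne x a with rfl | hxa
  · rw [c3_apply_left hab hac, c3_apply_mid hbc hab.symm]
  rcases eq_or_ne x b with rfl | hxb
  · rw [c3_apply_mid hac.symm hbc.symm, c3_apply_right]
  rcases eq_or_ne x c with rfl | hxc
  · rw [c3_apply_right, c3_apply_left hac.symm hbc.symm]
  · rw [c3_apply_of_ne hxa hxb hxc, c3_apply_of_ne hxc hxa hxb]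

variable (G : Subgroup (Perm α))

lemma c3_mem_inv {a b c : α} (h : c3 a b c ∈ G) : c3 c b a ∈ G :=
  c3_inv a b c ▸ inv_mem h

lemma c3_mem_rot {a b c : α} (hab : a ≠ b) (hbc : b ≠ c) (hac : a ≠ c)
    (h : c3 a b c ∈ G) : c3 c a b ∈ G := (c3_rot hab hbc hac) ▸ h

lemma c3_mem_of {x y z a b c : α} (hxy : x ≠ y) (hyz : y ≠ z) (hxz : x ≠ z)
    (h : c3 x y z ∈ G)
    (hab : a ≠ b) (hbc : b ≠ c) (hac : a ≠ c)
    (hset : ({a, b, c} : Finset α) = {x, y, z}) : c3 a b c ∈ G := by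
  have h1 : c3 x y z ∈ G := h
  have h2 : c3 z x y ∈ G := c3_mem_rot G hxy hyz hxz h1
  have h3 : c3 y z x ∈ G := c3_mem_rot G hxz.symm hxy hyz.symm h2
  have h4 : c3 z y x ∈ G := c3_mem_inv G h1
  have h5 : c3 x z y ∈ G := c3_mem_rot G hyz.symm hxy.symm hxz.symm h4
  have h6 : c3 y x z ∈ G := c3_mem_rot G hxz hyz.symm hxy h5
  have ha : a ∈ ({x, y, z} : Finset α) := by rw [← hset]; simp
  have hb : b ∈ ({x, y, z} : Finset α) := by rw [← hset]; simp
  have hc : c ∈ ({x, y, z} : Finset α) := by rw [← hset]; simp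
  simp only [mem_insert, mem_singleton] at ha hb hc
  rcases ha with rfl | rfl | rfl <;> rcases hb with rfl | rfl | rfl <;>
    rcases hc with rfl | rfl | rfl <;>
    first
      | exact h1 | exact h2 | exact h3 | exact h4 | exact h5 | exact h6
      | exact (hab rfl).elim | exact (hbc rfl).elim | exact (hac rfl).elim
      | exact (hxy rfl).elim | exact (hyz rfl).elim | exact (hxz rfl).elim


def Pgen (S : Finset α) : Prop :=
  ∀ a b c : α, a ∈ S → b ∈ S → c ∈ S → a ≠ b → b ≠ c → a ≠ c → c3 a b c ∈ G

lemma card_triple {a b c : α} (hab : a ≠ b) (hbc : b ≠ c) (hac : a ≠ c) :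
    ({a, b, c} : Finset α).card = 3 := by
  rw [card_insert_of_notMem (by simp [hab, hac]), card_insert_of_notMem (by simp [hbc]),
    card_singleton]

lemma c3_conj_mem {g : Perm α} (hg : g ∈ G) {a b c : α} (h : c3 a b c ∈ G)
    {a' b' c' : α} (ha : g a = a') (hb : g b = b') (hc : g c = c') : c3 a' b' c' ∈ G := by
  have h2 := mul_mem (mul_mem hg h) (inv_mem hg)
  rwa [c3_conj, ha, hb, hc] at h2

lemma isThreeCycle_c3 {τ : Perm α} (h : τ.IsThreeCycle) :
    ∃ a b c : α, a ≠ b ∧ b ≠ c ∧ a ≠ c ∧ τ = c3 a b c := by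
  have hcard : τ.support.card = 3 := h.card_support
  obtain ⟨a, ha⟩ := card_pos.1 (by rw [hcard]; omega : 0 < τ.support.card)
  have hab : a ≠ τ a := Ne.symm (mem_support.1 ha)
  have hbsupp : τ a ∈ τ.support := apply_mem_support.2 ha
  have hbc : τ a ≠ τ (τ a) := Ne.symm (mem_support.1 hbsupp)
  have hpow3 : τ ^ 3 = 1 := by
    rw [← h.orderOf]
    exact pow_orderOf_eq_one τ
  have hca : τ (τ (τ a)) = a := by
    have h0 := congrArg (fun p : Perm α => p a) hpow3
    simpa [pow_succ, Equiv.Perm.mul_apply] using h0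
  have hac : a ≠ τ (τ a) := by
    intro hacx
    have hba : τ a = a := by
      conv_lhs => rw [hacx]
      exact hca
    exact hab hba.symm
  have hcsupp : τ (τ a) ∈ τ.support := apply_mem_support.2 hbsupp
  have hsub : ({a, τ a, τ (τ a)} : Finset α) ⊆ τ.support := by
    intro x hx
    simp only [mem_insert, mem_singleton] at hx
    rcases hx with h' | h' | h' <;> rw [h'] <;> assumption
  have hsupp_eq : τ.support = {a, τ a, τ (τ a)} :=
    (eq_of_subset_of_card_le hsub (by rw [hcard, card_triple hab hbc hac])).symm
  refine ⟨a, τ a, τ (τ a), hab, hbc, hac, ?_⟩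
  ext x
  by_cases hx : x ∈ τ.support
  · rw [hsupp_eq] at hx
    simp only [mem_insert, mem_singleton] at hx
    rcases hx with h' | h' | h'
    · rw [h', c3_apply_left hab hac]
    · rw [h', c3_apply_mid hac.symm hbc.symm]
    · rw [h', c3_apply_right, hca]
  · have hfix : τ x = x := notMem_support.1 hx
    rw [hsupp_eq] at hx
    simp only [mem_insert, mem_singleton] at hx
    push_neg at hx
    rw [hfix, c3_apply_of_ne hx.1 hx.2.1 hx.2.2]


lemma Pgen_conj {S : Finset α} (hS : Pgen G S) {g : Perm α} (hg : g ∈ G) :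
    Pgen G (S.image g) := by
  intro a b c ha hb hc hab hbc hac
  obtain ⟨a', ha', rfl⟩ := mem_image.1 ha
  obtain ⟨b', hb', rfl⟩ := mem_image.1 hb
  obtain ⟨c', hc', rfl⟩ := mem_image.1 hc
  exact c3_conj_mem G hg (hS a' b' c' ha' hb' hc'
    (fun h => hab (by rw [h])) (fun h => hbc (by rw [h])) (fun h => hac (by rw [h])))
    rfl rfl rfl

lemma Pgen_of_c3 {d e f : α} (hde : d ≠ e) (hef : e ≠ f) (hdf : d ≠ f)
    (h : c3 d e f ∈ G) : Pgen G {d, e, f} := by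
  intro a b c ha hb hc hab hbc hac
  refine c3_mem_of G hde hef hdf h hab hbc hac ?_
  apply eq_of_subset_of_card_le
  · intro x hx
    simp only [mem_insert, mem_singleton] at hx ⊢
    rcases hx with rfl | rfl | rfl
    · simpa using ha
    · simpa using hb
    · simpa using hc
  · rw [card_triple hab hbc hac, card_triple hde hef hdf]

lemma Pgen_insert {S : Finset α} (hS : Pgen G S) (h3 : 3 ≤ S.card)
    {t u v : α} (ht : t ∉ S) (hu : u ∈ S) (hv : v ∈ S) (huv : u ≠ v)
    (hgen : c3 u v t ∈ G) : Pgen G (insert t S) := by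
  have htu : t ≠ u := fun h => ht (h ▸ hu)
  have htv : t ≠ v := fun h => ht (h ▸ hv)
  have b0 : c3 u v t ∈ G := hgen
  have key : ∀ a b : α, a ∈ S → b ∈ S → a ≠ b → c3 a b t ∈ G := by
    rcases lt_or_ge S.card 4 with hlt | hge
    · -- |S| = 3 : S = {u, v, w}
      have hcard : S.card = 3 := le_antisymm (by omega) h3
      obtain ⟨w, hw, hwu, hwv⟩ : ∃ w ∈ S, w ≠ u ∧ w ≠ v := by
        have hne : ((S.erase u).erase v).Nonempty := by
          rw [← card_pos]
          have h2 : v ∈ S.erase u := mem_erase.2 ⟨huv.symm, hv⟩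
          rw [card_erase_of_mem h2, card_erase_of_mem hu, hcard]
          omega
        obtain ⟨w, hw⟩ := hne
        simp only [mem_erase] at hw
        exact ⟨w, hw.2.2, hw.2.1, hw.1⟩
      have htw : t ≠ w := fun h => ht (h ▸ hw)
      have a0 : c3 u v w ∈ G := hS u v w hu hv hw huv hwv.symm hwu.symm
      have c0 : c3 v t w ∈ G :=
        c3_conj_mem G b0 a0 (c3_apply_left huv htu.symm)
          (c3_apply_mid htu htv) (c3_apply_of_ne hwu hwv htw.symm)
      have ha' : c3 w v u ∈ G := by
        have h2 := inv_mem a0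
        rwa [c3_inv] at h2
      have d0 : c3 w u t ∈ G :=
        c3_conj_mem G ha' b0 (c3_apply_right w v u)
          (c3_apply_mid hwu.symm huv) (c3_apply_of_ne htw htv htu)
      intro a b ha hb hab
      have hta : t ≠ a := fun h => ht (h ▸ ha)
      have htb : t ≠ b := fun h => ht (h ▸ hb)
      have hmem : ∀ x ∈ S, x = u ∨ x = v ∨ x = w := by
        intro x hx
        by_contra hcon
        push_neg at hcon
        have hsub : insert x {u, v, w} ⊆ S := by
          intro y hy
          simp only [mem_insert, mem_singleton] at hy
          rcases hy with rfl | rfl | rfl | rfl <;> assumption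
        have hc2 := card_le_card hsub
        rw [card_insert_of_notMem (by simp [hcon.1, hcon.2.1, hcon.2.2]),
          card_triple huv hwv.symm hwu.symm, hcard] at hc2
        omega
      rcases hmem a ha with ha' | ha' | ha' <;> rcases hmem b hb with hb' | hb' | hb' <;>
        rw [ha', hb'] <;>
        [skip; skip; skip; skip; skip; skip; skip; skip; skip]
      · exact (hab (ha'.trans hb'.symm)).elim
      · exact b0
      · -- (u w t) from d0 : c3 w u t
        refine c3_mem_of G hwu htu.symm htw.symm d0 hwu.symm htw.symm htu.symm ?_
        ext s; simp only [mem_insert, mem_singleton]; tauto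
      · -- (v u t) from b0
        refine c3_mem_of G huv htv.symm htu.symm b0 huv.symm htu.symm htv.symm ?_
        ext s; simp only [mem_insert, mem_singleton]; tauto
      · exact (hab (ha'.trans hb'.symm)).elim
      · -- (v w t) from c0 : c3 v t w
        refine c3_mem_of G htv.symm htw hwv.symm c0 hwv.symm htw.symm htv.symm ?_
        ext s; simp only [mem_insert, mem_singleton]; tauto
      · exact d0
      · -- (w v t) from c0
        refine c3_mem_of G htv.symm htw hwv.symm c0 hwv htv.symm htw.symm ?_
        ext s; simp only [mem_insert, mem_singleton]; tauto
      · exact (hab (ha'.trans hb'.symm)).elim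
    · -- |S| ≥ 4
      have pick : ∀ x y z : α, ∃ w ∈ S, w ≠ x ∧ w ≠ y ∧ w ≠ z := by
        intro x y z
        by_contra hcon
        push_neg at hcon
        have hsub : S ⊆ {x, y, z} := by
          intro s hs
          simp only [mem_insert, mem_singleton]
          rcases eq_or_ne s x with h | h
          · exact Or.inl h
          rcases eq_or_ne s y with h' | h'
          · exact Or.inr (Or.inl h')
          exact Or.inr (Or.inr (hcon s hs h h'))
        have hc2 := card_le_card hsub
        have hc3 : ({x, y, z} : Finset α).card ≤ 3 := by
          refine le_trans (card_insert_le _ _) ?_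
          have h4 := card_insert_le y ({z} : Finset α)
          simp only [card_singleton] at h4 ⊢
          omega
        omega
      have X : ∀ b' ∈ S, b' ≠ u → b' ≠ v → c3 u b' t ∈ G := by
        intro b' hb' hbu hbv
        have htb' : t ≠ b' := fun h => ht (h ▸ hb')
        obtain ⟨w, hw, hwv, hwb, hwu⟩ := pick v b' u
        have htw : t ≠ w := fun h => ht (h ▸ hw)
        have hh : c3 v b' w ∈ G := hS v b' w hv hb' hw hbv.symm hwb.symm hwv.symm
        exact c3_conj_mem G hh b0
          (c3_apply_of_ne huv hbu.symm hwu.symm)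
          (c3_apply_left hbv.symm hwv.symm)
          (c3_apply_of_ne htv htb' htw)
      intro a b ha hb hab
      have hta : t ≠ a := fun h => ht (h ▸ ha)
      have htb : t ≠ b := fun h => ht (h ▸ hb)
      rcases eq_or_ne a u with hau | hau
      · rcases eq_or_ne b v with hbv | hbv
        · rw [hau, hbv]; exact b0
        · have hbu : b ≠ u := fun h => hab (hau.trans h.symm)
          rw [hau]; exact X b hb hbu hbv
      rcases eq_or_ne b u with hbu | hbu
      · rcases eq_or_ne a v with hav | hav
        · rw [hav, hbu]
          refine c3_mem_of G huv htv.symm htu.symm b0 huv.symm htu.symm htv.symm ?_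
          ext s; simp only [mem_insert, mem_singleton]; tauto
        · have hx := X a ha hau hav
          rw [hbu]
          refine c3_mem_of G hau.symm hta.symm htu.symm hx hau htu.symm hta.symm ?_
          ext s; simp only [mem_insert, mem_singleton]; tauto
      rcases eq_or_ne a v with hav | hav
      · -- a = v, b ∉ {u, v}
        have hbv : b ≠ v := fun h => hab (hav.trans h.symm)
        obtain ⟨w, hw, hwu, hwv2, hwb⟩ := pick u v b
        have htw : t ≠ w := fun h => ht (h ▸ hw)
        have hh : c3 u b w ∈ G := hS u b w hu hb hw hbu.symm hwb.symm hwu.symm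
        have hres : c3 b v t ∈ G :=
          c3_conj_mem G hh b0 (c3_apply_left hbu.symm hwu.symm)
            (c3_apply_of_ne huv.symm hbv.symm hwv2.symm)
            (c3_apply_of_ne htu htb htw)
        rw [hav]
        refine c3_mem_of G hbv htv.symm htb.symm hres hbv.symm htb.symm htv.symm ?_
        ext s; simp only [mem_insert, mem_singleton]; tauto
      rcases eq_or_ne b v with hbv | hbv
      · -- b = v, a ∉ {u, v}
        obtain ⟨w, hw, hwu, hwv2, hwa⟩ := pick u v a
        have htw : t ≠ w := fun h => ht (h ▸ hw)
        have hh : c3 u a w ∈ G := hS u a w hu ha hw hau.symm hwa.symm hwu.symm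
        have hres : c3 a v t ∈ G :=
          c3_conj_mem G hh b0 (c3_apply_left hau.symm hwu.symm)
            (c3_apply_of_ne huv.symm hav.symm hwv2.symm)
            (c3_apply_of_ne htu hta htw)
        rw [hbv]; exact hres
      · -- a, b ∉ {u, v}
        have hx := X a ha hau hav
        obtain ⟨w, hw, hwu, hwa, hwb⟩ := pick u a b
        have htw : t ≠ w := fun h => ht (h ▸ hw)
        have hh : c3 u b w ∈ G := hS u b w hu hb hw hbu.symm hwb.symm hwu.symm
        have hres : c3 b a t ∈ G :=
          c3_conj_mem G hh hx (c3_apply_left hbu.symm hwu.symm)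
            (c3_apply_of_ne hau hab hwa.symm)
            (c3_apply_of_ne htu htb htw)
        refine c3_mem_of G hab.symm hta.symm htb.symm hres hab htb.symm hta.symm ?_
        ext s; simp only [mem_insert, mem_singleton]; tauto
  -- conclude
  intro a b c ha hb hc hab hbc hac
  simp only [mem_insert] at ha hb hc
  rcases ha with hat | haS
  · rcases hb with hbt | hbS
    · exact (hab (hat.trans hbt.symm)).elim
    rcases hc with hct | hcS
    · exact (hac (hat.trans hct.symm)).elim
    have hbt : b ≠ t := fun h => ht (h ▸ hbS)
    have hct : c ≠ t := fun h => ht (h ▸ hcS)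
    rw [hat]
    exact c3_mem_rot G hbc hct hbt (key b c hbS hcS hbc)
  rcases hb with hbt | hbS
  · rcases hc with hct | hcS
    · exact (hbc (hbt.trans hct.symm)).elim
    have hat : a ≠ t := fun h => ht (h ▸ haS)
    have hct : c ≠ t := fun h => ht (h ▸ hcS)
    rw [hbt]
    have h1 := key c a hcS haS (fun h => hac (h.symm))
    have r1 := c3_mem_rot G (fun h => hac h.symm) hat hct h1
    exact c3_mem_rot G hct.symm (fun h => hac h.symm) hat.symm r1
  rcases hc with hct | hcS
  · rw [hct]
    exact key a b haS hbS hab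
  · exact hS a b c haS hbS hcS hab hbc hac

lemma Pgen_union {S T : Finset α} (hS : Pgen G S) (hT : Pgen G T) {a b : α}
    (haS : a ∈ S) (haT : a ∈ T) (hbS : b ∈ S) (hbT : b ∈ T) (hab : a ≠ b)
    (h3 : 3 ≤ S.card) : Pgen G (S ∪ T) := by
  generalize hm : (T \ S).card = m
  induction m generalizing S with
  | zero =>
    have hsub : T ⊆ S := by
      rw [← sdiff_eq_empty_iff_subset]
      exact card_eq_zero.1 hm
    rw [union_eq_left.2 hsub]
    exact hS
  | succ m ih =>
    have hne : (T \ S).Nonempty := by rw [← card_pos, hm]; omega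
    obtain ⟨t, htTS⟩ := hne
    have htT : t ∈ T := (mem_sdiff.1 htTS).1
    have htS : t ∉ S := (mem_sdiff.1 htTS).2
    have hta : t ≠ a := fun h => htS (h ▸ haS)
    have htb : t ≠ b := fun h => htS (h ▸ hbS)
    have hP' : Pgen G (insert t S) :=
      Pgen_insert G hS h3 htS haS hbS hab (hT a b t haT hbT htT hab htb.symm hta.symm)
    have hcard' : (T \ insert t S).card = m := by
      rw [sdiff_insert, card_erase_of_mem htTS, hm]
      omega
    have hres := ih hP' (mem_insert_of_mem haS) (mem_insert_of_mem hbS)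
      (le_trans h3 (card_le_card (subset_insert _ _))) hcard'
    rwa [insert_union, insert_eq_self.2 (mem_union_right _ htT)] at hres

lemma Pgen_univ
    (hT2 : ∀ F : Finset α, F.card = 2 → ∀ u v : α, u ∉ F → v ∉ F →
      ∃ g ∈ G, (∀ x ∈ F, g x = x) ∧ g u = v)
    {S₀ : Finset α} (h3 : 3 ≤ S₀.card) (hP : Pgen G S₀) :
    Pgen G (univ : Finset α) := by
  suffices H : ∀ m (S : Finset α), 3 ≤ S.card → Pgen G S → (univ \ S).card ≤ m →
      Pgen G univ from H (univ \ S₀).card S₀ h3 hP le_rfl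
  intro m
  induction m with
  | zero =>
    intro S h3' hP' hc
    have hsub : (univ : Finset α) ⊆ S := by
      rw [← sdiff_eq_empty_iff_subset]
      exact card_eq_zero.1 (Nat.le_zero.1 hc)
    have hSu : S = univ := (eq_of_subset_of_card_le hsub (card_le_card (subset_univ S))).symm
    rwa [hSu] at hP'
  | succ m ih =>
    intro S h3' hP' hc
    by_cases huniv : S = univ
    · rwa [huniv] at hP'
    · have hne : (univ \ S).Nonempty := by
        rw [← card_pos, card_sdiff_of_subset (subset_univ S)]
        have := card_lt_card (Finset.ssubset_univ_iff.2 huniv)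
        omega
      obtain ⟨t, htc⟩ := hne
      have ht : t ∉ S := (mem_sdiff.1 htc).2
      obtain ⟨a, haS⟩ := card_pos.1 (by omega : 0 < S.card)
      have h2 : 0 < (S.erase a).card := by rw [card_erase_of_mem haS]; omega
      obtain ⟨b, hbe⟩ := card_pos.1 h2
      have hbS : b ∈ S := mem_of_mem_erase hbe
      have hba : b ≠ a := (mem_erase.1 hbe).1
      have h2' : 0 < ((S.erase a).erase b).card := by
        rw [card_erase_of_mem hbe, card_erase_of_mem haS]; omega
      obtain ⟨c', hce⟩ := card_pos.1 h2'
      have hcS : c' ∈ S := mem_of_mem_erase (mem_of_mem_erase hce)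
      have hcb : c' ≠ b := (mem_erase.1 hce).1
      have hca : c' ≠ a := (mem_erase.1 (mem_of_mem_erase hce)).1
      have hab : a ≠ b := hba.symm
      have hcardab : ({a, b} : Finset α).card = 2 := by
        rw [card_insert_of_notMem (by simp [hab]), card_singleton]
      obtain ⟨g, hgG, hfix, hgc⟩ := hT2 {a, b} hcardab c' t
        (by simp [hca, hcb]) (by
          simp only [mem_insert, mem_singleton]
          push_neg
          exact ⟨fun h => ht (h ▸ haS), fun h => ht (h ▸ hbS)⟩)
      have hga : g a = a := hfix a (by simp)
      have hgb : g b = b := hfix b (by simp)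
      have hPi : Pgen G (S.image g) := Pgen_conj G hP' hgG
      have hPu : Pgen G (S ∪ S.image g) :=
        Pgen_union G hP' hPi haS (mem_image.2 ⟨a, haS, hga⟩) hbS
          (mem_image.2 ⟨b, hbS, hgb⟩) hab h3'
      have htmem : t ∈ S ∪ S.image g :=
        mem_union_right _ (mem_image.2 ⟨c', hcS, hgc⟩)
      have hss : S ⊂ S ∪ S.image g :=
        ⟨subset_union_left, fun hsub => ht (hsub htmem)⟩
      refine ih (S ∪ S.image g) (le_trans h3' (card_le_card subset_union_left)) hPu ?_
      have hlt := card_lt_card hss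
      rw [card_sdiff_of_subset (subset_univ _)] at hc ⊢
      have h5 := card_le_card (subset_univ (S ∪ S.image g))
      omega

/-- Core lemma: a "transitive" subgroup on an invariant finite domain `Om` containing a
cycle of prime length `q` with `q < |Om| < 2q` has transitive point stabilizers on `Om`. -/
lemma two_trans
    (H : Subgroup (Perm α)) (Om : Finset α)
    (hInv : ∀ h ∈ H, ∀ x ∈ Om, h x ∈ Om)
    (htr : ∀ u ∈ Om, ∀ v ∈ Om, ∃ h ∈ H, h u = v)
    (σ : Perm α) (hσH : σ ∈ H) (hc : σ.IsCycle)
    (hsupp : σ.support ⊆ Om)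
    (hprime : (σ.support.card).Prime)
    (hm2 : Om.card < 2 * σ.support.card)
    (hqm : σ.support.card < Om.card) :
    ∀ y ∈ Om, ∀ u ∈ Om, ∀ v ∈ Om, u ≠ y → v ≠ y →
      ∃ h ∈ H, h y = y ∧ h u = v := by
  classical
  set q := σ.support.card with hq
  set Γ := σ.support with hΓ
  -- fibers all have the same cardinality
  have hfib : ∀ x ∈ Om, ∀ w ∈ Om, ∀ x' ∈ Om, ∀ w' ∈ Om,
      (univ.filter fun h : ↥H => (h : Perm α) x = w).card
        = (univ.filter fun h : ↥H => (h : Perm α) x' = w').card := by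
    intro x hx w hw x' hx' w' hw'
    obtain ⟨t, htH, htx⟩ := htr x' hx' x hx
    obtain ⟨s, hsH, hsw⟩ := htr w hw w' hw'
    refine Finset.card_bij' (fun h _ => (⟨s, hsH⟩ : ↥H) * h * ⟨t, htH⟩)
      (fun h _ => (⟨s, hsH⟩ : ↥H)⁻¹ * h * (⟨t, htH⟩ : ↥H)⁻¹) ?_ ?_ ?_ ?_
    · intro a ha
      simp only [mem_filter, mem_univ, true_and] at ha ⊢
      simp only [Subgroup.coe_mul, Equiv.Perm.mul_apply, htx, ha, hsw]
    · intro a ha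
      simp only [mem_filter, mem_univ, true_and] at ha ⊢
      have h1 : t x' = x := htx
      have h2 : (t : Perm α)⁻¹ x = x' := by rw [← h1, Equiv.Perm.inv_apply_self]
      have h3 : (s : Perm α)⁻¹ w' = w := by rw [← hsw, Equiv.Perm.inv_apply_self]
      simp only [Subgroup.coe_mul, InvMemClass.coe_inv, Equiv.Perm.mul_apply, h2, ha, h3]
    · intro a _; group
    · intro a _; group
  -- the two counting sets have equal cardinality
  have hcount : ∀ z ∈ Om, ∀ y' ∈ Om,
      (univ.filter fun h : ↥H => (h : Perm α) z ∈ Γ).card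
        = (univ.filter fun h : ↥H => (h : Perm α) y' ∈ Γ).card := by
    have hsplit : ∀ x ∈ Om,
        (univ.filter fun h : ↥H => (h : Perm α) x ∈ Γ).card
          = ∑ w ∈ Γ, (univ.filter fun h : ↥H => (h : Perm α) x = w).card := by
      intro x hx
      rw [card_eq_sum_card_fiberwise (f := fun h : ↥H => (h : Perm α) x) (t := Γ)
        (s := univ.filter fun h : ↥H => (h : Perm α) x ∈ Γ)
        (fun h hh => (mem_filter.1 (Finset.mem_coe.1 hh)).2)]
      refine Finset.sum_congr rfl ?_
      intro w hw
      congr 1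
      ext h
      simp only [mem_filter, mem_univ, true_and]
      constructor
      · rintro ⟨_, h2⟩; exact h2
      · intro h1; exact ⟨h1 ▸ hw, h1⟩
    intro z hz y' hy'
    rw [hsplit z hz, hsplit y' hy']
    refine Finset.sum_congr rfl ?_
    intro w hw
    exact hfib z hz w (hsupp hw) y' hy' w (hsupp hw)
  -- key separation property
  have hkey : ∀ z ∈ Om, ∀ y' ∈ Om, z ≠ y' →
      ∃ h ∈ H, h z ∈ Γ ∧ h y' ∉ Γ := by
    intro z hz y' hy' hzy
    by_contra hcon
    push_neg at hcon
    have hsub : (univ.filter fun h : ↥H => (h : Perm α) z ∈ Γ)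
        ⊆ (univ.filter fun h : ↥H => (h : Perm α) y' ∈ Γ) := by
      intro h hh
      simp only [mem_filter, mem_univ, true_and] at hh ⊢
      exact hcon (↑h) h.2 hh
    have heq := eq_of_subset_of_card_le hsub (hcount z hz y' hy').symm.le
    have hiff : ∀ h : ↥H, ((h : Perm α) z ∈ Γ ↔ (h : Perm α) y' ∈ Γ) := by
      intro h
      constructor
      · intro hh
        have h1 : h ∈ (univ.filter fun h : ↥H => (h : Perm α) z ∈ Γ) :=
          mem_filter.2 ⟨mem_univ _, hh⟩
        rw [heq] at h1
        exact (mem_filter.1 h1).2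
      · intro hh
        have h1 : h ∈ (univ.filter fun h : ↥H => (h : Perm α) y' ∈ Γ) :=
          mem_filter.2 ⟨mem_univ _, hh⟩
        rw [← heq] at h1
        exact (mem_filter.1 h1).2
    -- equivalence classes
    set E : α → Finset α := fun x =>
      Om.filter (fun x' => ∀ h : ↥H, ((h : Perm α) x ∈ Γ ↔ (h : Perm α) x' ∈ Γ)) with hE
    have e_self : ∀ x ∈ Om, x ∈ E x := fun x hx => mem_filter.2 ⟨hx, fun _ => Iff.rfl⟩
    have e_eq_of_mem : ∀ x x', x' ∈ E x → E x = E x' := by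
      intro x x' hx'
      obtain ⟨hx'Om, hiff'⟩ := mem_filter.1 hx'
      ext s
      simp only [hE, mem_filter]
      constructor
      · rintro ⟨hs, hiff''⟩; exact ⟨hs, fun h => ((hiff' h).symm).trans (hiff'' h)⟩
      · rintro ⟨hs, hiff''⟩; exact ⟨hs, fun h => (hiff' h).trans (hiff'' h)⟩
    have e_img : ∀ (h : ↥H) (x : α), (E x).image (h : Perm α) = E ((h : Perm α) x) := by
      intro h x
      ext s
      simp only [mem_image, hE, mem_filter]
      constructor
      · rintro ⟨x', ⟨hx'Om, hiff'⟩, rfl⟩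
        refine ⟨hInv _ h.2 _ hx'Om, fun g => ?_⟩
        have h2 := hiff' (g * h)
        simpa only [Subgroup.coe_mul, Equiv.Perm.mul_apply] using h2
      · rintro ⟨hsOm, hiff'⟩
        refine ⟨(h : Perm α)⁻¹ s, ⟨?_, fun g => ?_⟩, by simp⟩
        · have := hInv _ (inv_mem h.2) s hsOm
          simpa using this
        · have h2 := hiff' (g * h⁻¹)
          simpa only [Subgroup.coe_mul, InvMemClass.coe_inv, Equiv.Perm.mul_apply,
            Equiv.Perm.inv_apply_self] using h2
    have e_card : ∀ x ∈ Om, ∀ x' ∈ Om, (E x).card = (E x').card := by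
      intro x hx x' hx'
      obtain ⟨t, htH, htx⟩ := htr x hx x' hx'
      have h1 := e_img ⟨t, htH⟩ x
      simp only at h1
      rw [htx] at h1
      rw [← h1, card_image_of_injective _ (Equiv.injective t)]
    have e_sub_Γ : ∀ x ∈ Γ, E x ⊆ Γ := by
      intro x hx s hs
      obtain ⟨_, hiff'⟩ := mem_filter.1 hs
      have h1 := hiff' 1
      simp only [OneMemClass.coe_one, Equiv.Perm.one_apply] at h1
      exact h1.1 hx
    have e_out_Γ : ∀ x ∈ Om, x ∉ Γ → E x ⊆ Om \ Γ := by
      intro x hx hxΓ s hs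
      obtain ⟨hsOm, hiff'⟩ := mem_filter.1 hs
      have h1 := hiff' 1
      simp only [OneMemClass.coe_one, Equiv.Perm.one_apply] at h1
      exact mem_sdiff.2 ⟨hsOm, fun hsΓ => hxΓ (h1.2 hsΓ)⟩
    have hyEz : y' ∈ E z := mem_filter.2 ⟨hy', hiff⟩
    have hd2 : 2 ≤ (E z).card := by
      have h1 : ({z, y'} : Finset α) ⊆ E z := by
        intro s hs
        simp only [mem_insert, mem_singleton] at hs
        rcases hs with h | h
        · rw [h]; exact e_self z hz
        · rw [h]; exact hyEz
      have h2 := card_le_card h1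
      rw [card_insert_of_notMem (by simp [hzy]), card_singleton] at h2
      omega
    obtain ⟨x₀, hx₀⟩ := card_pos.1 (hprime.pos)
    have hx₀Om : x₀ ∈ Om := hsupp hx₀
    -- first case: E (σ x₀) = E x₀ is impossible
    have hfix_false : E (σ x₀) = E x₀ → False := by
      intro hfix
      have himg : (E x₀).image σ = E x₀ := by
        have h1 := e_img ⟨σ, hσH⟩ x₀
        simpa [hfix] using h1
      have hinv' : ∀ j : ℕ, (σ ^ j) x₀ ∈ E x₀ := by
        intro j
        induction j with
        | zero => simpa using e_self x₀ hx₀Om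
        | succ j ihj =>
          have h1 : σ ((σ ^ j) x₀) ∈ (E x₀).image σ := mem_image_of_mem σ ihj
          rw [himg] at h1
          rw [pow_succ', Equiv.Perm.mul_apply]
          exact h1
      have hΓsub : Γ ⊆ E x₀ := by
        intro w hw
        obtain ⟨j, hj⟩ := hc.exists_pow_eq (mem_support.1 hx₀) (mem_support.1 hw)
        rw [← hj]; exact hinv' j
      have hEx₀ : E x₀ = Γ := Subset.antisymm (e_sub_Γ x₀ hx₀) hΓsub
      have hout : (Om \ Γ).Nonempty := by
        rw [← card_pos, card_sdiff_of_subset hsupp]; omega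
      obtain ⟨u₀, hu₀⟩ := hout
      have hu₀Om := (mem_sdiff.1 hu₀).1
      have hu₀Γ := (mem_sdiff.1 hu₀).2
      have h1 : (E u₀).card = q := by
        rw [e_card u₀ hu₀Om x₀ hx₀Om, hEx₀]
      have h3 := card_le_card (e_out_Γ u₀ hu₀Om hu₀Γ)
      rw [h1, card_sdiff_of_subset hsupp] at h3
      omega
    -- dichotomy on distinctness of the classes E (σ^j x₀)
    by_cases hdisj : ∀ i, i < q → ∀ j, j < q → E ((σ ^ i) x₀) = E ((σ ^ j) x₀) → i = j
    · -- all distinct: too many disjoint classes inside Γ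
      have hpair : ∀ i ∈ range q, ∀ j ∈ range q, i ≠ j →
          Disjoint (E ((σ ^ i) x₀)) (E ((σ ^ j) x₀)) := by
        intro i hi j hj hij
        by_contra hnd
        rw [Finset.not_disjoint_iff] at hnd
        obtain ⟨s, hs1, hs2⟩ := hnd
        exact hij (hdisj i (mem_range.1 hi) j (mem_range.1 hj)
          ((e_eq_of_mem _ _ hs1).trans (e_eq_of_mem _ _ hs2).symm))
      have hsubΓ : ∀ j, E ((σ ^ j) x₀) ⊆ Γ := by
        intro j
        exact e_sub_Γ _ (pow_apply_mem_support.2 hx₀)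
      have hjcard : ∀ j, 2 ≤ (E ((σ ^ j) x₀)).card := by
        intro j
        have hjOm : (σ ^ j) x₀ ∈ Om := hsupp (pow_apply_mem_support.2 hx₀)
        rw [e_card _ hjOm z hz]
        exact hd2
      have hb1 : ((range q).biUnion (fun j => E ((σ ^ j) x₀))).card ≤ Γ.card := by
        apply card_le_card
        intro s hs
        rw [mem_biUnion] at hs
        obtain ⟨j, _, hs⟩ := hs
        exact hsubΓ j hs
      rw [card_biUnion hpair] at hb1
      have hb2 : q * 2 ≤ ∑ j ∈ range q, (E ((σ ^ j) x₀)).card := by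
        calc q * 2 = ∑ _j ∈ range q, 2 := by rw [sum_const, card_range, smul_eq_mul]
        _ ≤ _ := Finset.sum_le_sum (fun j _ => hjcard j)
      rw [← hq] at hb1
      have := hprime.pos
      omega
    · push_neg at hdisj
      obtain ⟨i, hi, j, hj, hEij, hij⟩ := hdisj
      have cancel : ∀ a b : ℕ, a ≤ b → E ((σ ^ a) x₀) = E ((σ ^ b) x₀) →
          E ((σ ^ (b - a)) x₀) = E x₀ := by
        intro a b hab heq'
        have hco : ((⟨σ, hσH⟩ : ↥H) ^ a : ↥H) = ⟨σ ^ a, pow_mem hσH a⟩ := by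
          ext; simp
        have h1 := e_img (⟨σ, hσH⟩ ^ a) ((σ ^ (b - a)) x₀)
        have h2 := e_img (⟨σ, hσH⟩ ^ a) x₀
        rw [hco] at h1 h2
        simp only at h1 h2
        have h3 : (σ ^ a) ((σ ^ (b - a)) x₀) = (σ ^ b) x₀ := by
          rw [← Equiv.Perm.mul_apply, ← pow_add]
          congr 2
          omega
        rw [h3] at h1
        rw [← heq'] at h1
        rw [← h2] at h1
        exact Finset.image_injective (Equiv.injective (σ ^ a)) h1
      have hr : ∃ r, 0 < r ∧ r < q ∧ E ((σ ^ r) x₀) = E x₀ := by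
        rcases lt_or_gt_of_ne hij with h | h
        · exact ⟨j - i, by omega, by omega, cancel i j (by omega) hEij⟩
        · exact ⟨i - j, by omega, by omega, cancel j i (by omega) hEij.symm⟩
      obtain ⟨r, hr0, hrq, hEr⟩ := hr
      have hadd : ∀ a b : ℕ, E ((σ ^ a) x₀) = E x₀ → E ((σ ^ b) x₀) = E x₀ →
          E ((σ ^ (a + b)) x₀) = E x₀ := by
        intro a b ha hb
        have hco : ((⟨σ, hσH⟩ : ↥H) ^ a : ↥H) = ⟨σ ^ a, pow_mem hσH a⟩ := by
          ext; simp
        have h1 := e_img (⟨σ, hσH⟩ ^ a) ((σ ^ b) x₀)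
        have h2 := e_img (⟨σ, hσH⟩ ^ a) x₀
        rw [hco] at h1 h2
        simp only at h1 h2
        have h3 : (σ ^ a) ((σ ^ b) x₀) = (σ ^ (a + b)) x₀ := by
          rw [← Equiv.Perm.mul_apply, ← pow_add]
        rw [h3] at h1
        rw [hb] at h1
        rw [h2] at h1
        rw [← h1, ha]
      have hmul : ∀ k : ℕ, E ((σ ^ (k * r)) x₀) = E x₀ := by
        intro k
        induction k with
        | zero => simp
        | succ k ihk =>
          have := hadd (k * r) r ihk hEr
          have hkr : k * r + r = (k + 1) * r := by ring
          rwa [hkr] at this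
      have hco : Nat.Coprime r q :=
        (Nat.coprime_comm.1 ((hprime.coprime_iff_not_dvd).2 (Nat.not_dvd_of_pos_of_lt hr0 hrq)))
      obtain ⟨m, -, hm⟩ := Nat.exists_mul_mod_eq_one_of_coprime hco hprime.one_lt
      have h1 := hmul m
      have horder : orderOf σ = q := hc.orderOf
      have h2 : (σ ^ (m * r)) x₀ = σ x₀ := by
        have h3 : σ ^ (m * r) = σ ^ ((m * r) % orderOf σ) := (pow_mod_orderOf σ (m * r)).symm
        rw [h3, horder, mul_comm m r, hm, pow_one]
      rw [h2] at h1
      exact hfix_false h1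
  -- conclusion
  intro y hy u hu v hv huy hvy
  obtain ⟨h1p, h1H, h1u, h1y⟩ := hkey u hu y hy huy
  obtain ⟨h2p, h2H, h2v, h2y⟩ := hkey v hv y hy hvy
  set S1 := Γ.image (h1p⁻¹ : Perm α) with hS1def
  set S2 := Γ.image (h2p⁻¹ : Perm α) with hS2def
  have hS1 : S1 ⊆ Om := by
    intro s hs
    obtain ⟨γ, hγ, rfl⟩ := mem_image.1 hs
    exact hInv _ (inv_mem h1H) _ (hsupp hγ)
  have hS2 : S2 ⊆ Om := by
    intro s hs
    obtain ⟨γ, hγ, rfl⟩ := mem_image.1 hs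
    exact hInv _ (inv_mem h2H) _ (hsupp hγ)
  have hcard1 : S1.card = q := card_image_of_injective _ (Equiv.injective _)
  have hcard2 : S2.card = q := card_image_of_injective _ (Equiv.injective _)
  have hinter : (S1 ∩ S2).Nonempty := by
    rw [← card_pos]
    have h1 := card_union_add_card_inter S1 S2
    have h2 := card_le_card (union_subset hS1 hS2)
    omega
  obtain ⟨w, hw⟩ := hinter
  have hw1 : h1p w ∈ Γ := by
    obtain ⟨γ, hγ, hγw⟩ := mem_image.1 (mem_inter.1 hw).1
    rw [← hγw, Equiv.Perm.apply_inv_self]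
    exact hγ
  have hw2 : h2p w ∈ Γ := by
    obtain ⟨γ, hγ, hγw⟩ := mem_image.1 (mem_inter.1 hw).2
    rw [← hγw, Equiv.Perm.apply_inv_self]
    exact hγ
  obtain ⟨j1, hj1⟩ := hc.exists_pow_eq (mem_support.1 h1u) (mem_support.1 hw1)
  obtain ⟨j2, hj2⟩ := hc.exists_pow_eq (mem_support.1 hw2) (mem_support.1 h2v)
  have hy1 : (σ ^ j1) (h1p y) = h1p y := by
    have h3 : h1p y ∉ (σ ^ j1).support := fun hmem => h1y (support_pow_le σ j1 hmem)
    exact notMem_support.1 h3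
  have hy2 : (σ ^ j2) (h2p y) = h2p y := by
    have h3 : h2p y ∉ (σ ^ j2).support := fun hmem => h2y (support_pow_le σ j2 hmem)
    exact notMem_support.1 h3
  refine ⟨(h2p⁻¹ * σ ^ j2 * h2p) * (h1p⁻¹ * σ ^ j1 * h1p), ?_, ?_, ?_⟩
  · exact mul_mem (mul_mem (mul_mem (inv_mem h2H) (pow_mem hσH j2)) h2H)
      (mul_mem (mul_mem (inv_mem h1H) (pow_mem hσH j1)) h1H)
  · simp only [Equiv.Perm.mul_apply]
    rw [hy1, Equiv.Perm.inv_apply_self, hy2, Equiv.Perm.inv_apply_self]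
  · simp only [Equiv.Perm.mul_apply]
    rw [hj1, Equiv.Perm.inv_apply_self, hj2, Equiv.Perm.inv_apply_self]

/-- pointwise stabilizer of `F` inside `G` -/
def stabG (G : Subgroup (Perm α)) (F : Finset α) : Subgroup (Perm α) where
  carrier := {g | g ∈ G ∧ ∀ x ∈ F, g x = x}
  one_mem' := ⟨G.one_mem, fun _ _ => rfl⟩
  mul_mem' := by
    rintro a b ⟨haG, hfa⟩ ⟨hbG, hfb⟩
    exact ⟨G.mul_mem haG hbG, fun x hx => by
      simp only [Equiv.Perm.mul_apply, hfb x hx, hfa x hx]⟩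
  inv_mem' := by
    rintro a ⟨haG, hfa⟩
    refine ⟨G.inv_mem haG, fun x hx => ?_⟩
    conv_lhs => rw [← hfa x hx]
    exact Equiv.Perm.inv_apply_self a x

lemma mem_stabG {G : Subgroup (Perm α)} {F : Finset α} {g : Perm α} :
    g ∈ stabG G F ↔ g ∈ G ∧ ∀ x ∈ F, g x = x := Iff.rfl

/-- Iterated stabilizer transitivity and homogeneity. -/
lemma ttr (G : Subgroup (Perm α)) (σ : Perm α) (hσG : σ ∈ G) (hc : σ.IsCycle)
    (hprime : (σ.support.card).Prime)
    (hbig : Fintype.card α < 2 * σ.support.card)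
    (htrans : ∀ a b : α, ∃ g ∈ G, g a = b) :
    ∀ j : ℕ,
      (j + σ.support.card ≤ Fintype.card α →
        ∀ F : Finset α, F.card = j → ∃ g ∈ G, ∀ x ∈ F, g x ∉ σ.support) ∧
      (j + σ.support.card + 1 ≤ Fintype.card α →
        ∀ F : Finset α, F.card = j → ∀ u v : α, u ∉ F → v ∉ F →
          ∃ g ∈ G, (∀ x ∈ F, g x = x) ∧ g u = v) := by
  set q := σ.support.card with hqdef
  set N := Fintype.card α with hNdef
  intro j
  induction j with
  | zero =>
    constructor
    · intro _ F hF
      have hFe : F = ∅ := card_eq_zero.1 hF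
      exact ⟨1, G.one_mem, by simp [hFe]⟩
    · intro _ F hF u v _ _
      have hFe : F = ∅ := card_eq_zero.1 hF
      obtain ⟨g, hg, hguv⟩ := htrans u v
      exact ⟨g, hg, by simp [hFe], hguv⟩
  | succ j ih =>
    obtain ⟨ihHom, ihT⟩ := ih
    have homSucc : (j + 1) + q ≤ N →
        ∀ F : Finset α, F.card = j + 1 → ∃ g ∈ G, ∀ x ∈ F, g x ∉ σ.support := by
      intro hbound F hF
      obtain ⟨y, hy⟩ := card_pos.1 (by omega : 0 < F.card)
      set F₀ := F.erase y with hF₀def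
      have hF₀ : F₀.card = j := by rw [hF₀def, card_erase_of_mem hy, hF]; omega
      obtain ⟨g₀, hg₀G, hg₀⟩ := ihHom (by omega) F₀ hF₀
      set F' := F₀.image g₀ with hF'def
      have hF' : F'.card = j := by
        rw [hF'def, card_image_of_injective _ (Equiv.injective _), hF₀]
      have hwex : ∃ w, w ∉ σ.support ∪ F' := by
        by_contra hcon
        push_neg at hcon
        have hsub : (univ : Finset α) ⊆ σ.support ∪ F' := fun x _ => hcon x
        have h1 := card_le_card hsub
        have h2 := card_union_le σ.support F'
        rw [card_univ] at h1
        omega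
      obtain ⟨w, hwmem⟩ := hwex
      rw [mem_union] at hwmem
      push_neg at hwmem
      have hyF' : g₀ y ∉ F' := by
        intro hmem
        obtain ⟨x, hxF₀, hx⟩ := mem_image.1 hmem
        have hxy := Equiv.injective g₀ hx
        rw [hxy] at hxF₀
        exact (mem_erase.1 hxF₀).1 rfl
      obtain ⟨g₁, hg₁G, hg₁fix, hg₁y⟩ := ihT (by omega) F' hF' (g₀ y) w hyF' hwmem.2
      refine ⟨g₁ * g₀, G.mul_mem hg₁G hg₀G, ?_⟩
      intro x hx
      rcases eq_or_ne x y with rfl | hxy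
      · rw [Equiv.Perm.mul_apply, hg₁y]; exact hwmem.1
      · have hxF₀ : x ∈ F₀ := mem_erase.2 ⟨hxy, hx⟩
        rw [Equiv.Perm.mul_apply, hg₁fix (g₀ x) (mem_image_of_mem _ hxF₀)]
        exact hg₀ x hxF₀
    refine ⟨homSucc, ?_⟩
    intro hbound F hF u v hu hv
    obtain ⟨y, hy⟩ := card_pos.1 (by omega : 0 < F.card)
    set F₀ := F.erase y with hF₀def
    have hF₀ : F₀.card = j := by rw [hF₀def, card_erase_of_mem hy, hF]; omega
    set H := stabG G F₀ with hH
    set Om := F₀ᶜ with hOm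
    have hInv : ∀ h ∈ H, ∀ x ∈ Om, h x ∈ Om := by
      rintro h ⟨hhG, hfix⟩ x hx
      rw [hOm, Finset.mem_compl] at hx ⊢
      intro hmem
      have h2 := hfix _ hmem
      have h3 := Equiv.injective h h2
      rw [h3] at hmem
      exact hx hmem
    have htrOm : ∀ u' ∈ Om, ∀ v' ∈ Om, ∃ h ∈ H, h u' = v' := by
      intro u' hu' v' hv'
      rw [hOm, Finset.mem_compl] at hu' hv'
      obtain ⟨g, hgG, hfix, hguv⟩ := ihT (by omega) F₀ hF₀ u' v' hu' hv'
      exact ⟨g, ⟨hgG, hfix⟩, hguv⟩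
    obtain ⟨g, hgG, hgav⟩ := homSucc (by omega) F hF
    set σ' := g⁻¹ * σ * g with hσ'def
    have hσ'c : σ'.IsCycle := by
      have heq : σ' = g⁻¹ * σ * g⁻¹⁻¹ := by rw [inv_inv]
      rw [heq]
      exact hc.conj
    have hmemsupp : ∀ x, x ∈ σ'.support ↔ g x ∈ σ.support := by
      intro x
      rw [mem_support, mem_support, hσ'def]
      simp only [Equiv.Perm.mul_apply]
      exact not_congr (by rw [Equiv.Perm.inv_eq_iff_eq])
    have hσ'suppcard : σ'.support.card = q := by
      have heq : σ' = g⁻¹ * σ * g⁻¹⁻¹ := by rw [inv_inv]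
      rw [heq, card_support_conj]
    have hσ'H : σ' ∈ H := by
      refine ⟨G.mul_mem (G.mul_mem (G.inv_mem hgG) hσG) hgG, ?_⟩
      intro x hxF₀
      have hns : x ∉ σ'.support := by
        rw [hmemsupp]
        exact hgav x (mem_of_mem_erase hxF₀)
      exact notMem_support.1 hns
    have hσ'sub : σ'.support ⊆ Om := by
      intro x hx
      rw [hOm, Finset.mem_compl]
      intro hxF₀
      rw [hmemsupp] at hx
      exact hgav x (mem_of_mem_erase hxF₀) hx
    have hOmcard : Om.card = N - j := by rw [hOm, card_compl, hF₀]
    have hjN : j < N := by omega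
    have h2t := two_trans H Om hInv htrOm σ' hσ'H hσ'c hσ'sub
      (by rw [hσ'suppcard]; exact hprime)
      (by rw [hσ'suppcard, hOmcard]; omega)
      (by rw [hσ'suppcard, hOmcard]; omega)
    have hyOm : y ∈ Om := by
      rw [hOm, Finset.mem_compl]
      exact fun h => (mem_erase.1 h).1 rfl
    have huOm : u ∈ Om := by
      rw [hOm, Finset.mem_compl]
      exact fun h => hu (mem_of_mem_erase h)
    have hvOm : v ∈ Om := by
      rw [hOm, Finset.mem_compl]
      exact fun h => hv (mem_of_mem_erase h)
    have huy : u ≠ y := fun h => hu (h ▸ hy)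
    have hvy : v ≠ y := fun h => hv (h ▸ hy)
    obtain ⟨h, hhH, hhy, hhuv⟩ := h2t y hyOm u huOm v hvOm huy hvy
    refine ⟨h, hhH.1, ?_, hhuv⟩
    intro x hx
    rcases eq_or_ne x y with rfl | hxy
    · exact hhy
    · exact hhH.2 x (mem_erase.2 ⟨hxy, hx⟩)

lemma subgroup_eq_of_le_of_card_le {Gr : Type*} [Group Gr] [Finite Gr] {A B : Subgroup Gr}
    (hle : A ≤ B) (hcard : Nat.card ↥B ≤ Nat.card ↥A) : A = B := by
  have h1 : Nat.card (A.subgroupOf B) = Nat.card A :=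
    Nat.card_congr (Subgroup.subgroupOfEquivOfLe hle).toEquiv
  have htop : A.subgroupOf B = ⊤ := by
    apply Subgroup.eq_top_of_card_eq
    have h2 := Subgroup.card_le_of_le hle
    omega
  exact le_antisymm hle ((Subgroup.subgroupOf_eq_top).1 htop)

/-- The endgame: produce the 3-cycle `(d e f)` in `G`. -/
lemma endgame (σ : Perm α) (hσG : σ ∈ G) (hc : σ.IsCycle)
    (hprime : (σ.support.card).Prime)
    (hbig : Fintype.card α < 2 * σ.support.card)
    (d e f : α) (hd : d ∉ σ.support) (he : e ∉ σ.support) (hf : f ∉ σ.support)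
    (hde : d ≠ e) (hef : e ≠ f) (hdf : d ≠ f)
    (g₁ : Perm α) (hg₁G : g₁ ∈ G) (hg₁d : g₁ d = e) (hg₁e : g₁ e = d)
    (hg₁fix : ∀ x, x ∉ σ.support → x ≠ d → x ≠ e → g₁ x = x)
    (g₂ : Perm α) (hg₂G : g₂ ∈ G) (hg₂d : g₂ d = f) (hg₂f : g₂ f = d)
    (hg₂fix : ∀ x, x ∉ σ.support → x ≠ d → x ≠ f → g₂ x = x) :
    c3 d e f ∈ G := by
  classical
  set q := σ.support.card with hqdef
  haveI : Fact q.Prime := ⟨hprime⟩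
  have hq2 : 2 ≤ q := hprime.two_le
  have hqN : q ≤ Fintype.card α := le_trans (card_le_univ _) (le_of_eq card_univ)
  set C := stabG G σ.supportᶜ with hCdef
  have hmemC : ∀ g' : Perm α, g' ∈ C ↔ g' ∈ G ∧ ∀ x, x ∉ σ.support → g' x = x := by
    intro g'
    rw [hCdef, mem_stabG]
    constructor
    · rintro ⟨h1, h2⟩; exact ⟨h1, fun x hx => h2 x (Finset.mem_compl.2 hx)⟩
    · rintro ⟨h1, h2⟩; exact ⟨h1, fun x hx => h2 x (Finset.mem_compl.1 hx)⟩
  have hσC : σ ∈ C := (hmemC σ).2 ⟨hσG, fun x hx => notMem_support.1 hx⟩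
  -- Δ-stability of g₁, g₂ and their inverses
  have hg₁Δ : ∀ x, x ∉ σ.support → g₁ x ∉ σ.support := by
    intro x hx
    rcases eq_or_ne x d with h | hxd
    · rw [h, hg₁d]; exact he
    rcases eq_or_ne x e with h | hxe
    · rw [h, hg₁e]; exact hd
    · rw [hg₁fix x hx hxd hxe]; exact hx
  have hg₂Δ : ∀ x, x ∉ σ.support → g₂ x ∉ σ.support := by
    intro x hx
    rcases eq_or_ne x d with h | hxd
    · rw [h, hg₂d]; exact hf
    rcases eq_or_ne x f with h | hxf
    · rw [h, hg₂f]; exact hd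
    · rw [hg₂fix x hx hxd hxf]; exact hx
  have hg₁inv : ∀ x, x ∉ σ.support → g₁⁻¹ x ∉ σ.support := by
    intro x hx
    rcases eq_or_ne x d with h | hxd
    · rw [h, show g₁⁻¹ d = e by rw [Equiv.Perm.inv_eq_iff_eq, hg₁e]]; exact he
    rcases eq_or_ne x e with h | hxe
    · rw [h, show g₁⁻¹ e = d by rw [Equiv.Perm.inv_eq_iff_eq, hg₁d]]; exact hd
    · rw [show g₁⁻¹ x = x by rw [Equiv.Perm.inv_eq_iff_eq, hg₁fix x hx hxd hxe]]; exact hx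
  have hg₂inv : ∀ x, x ∉ σ.support → g₂⁻¹ x ∉ σ.support := by
    intro x hx
    rcases eq_or_ne x d with h | hxd
    · rw [h, show g₂⁻¹ d = f by rw [Equiv.Perm.inv_eq_iff_eq, hg₂f]]; exact hf
    rcases eq_or_ne x f with h | hxf
    · rw [h, show g₂⁻¹ f = d by rw [Equiv.Perm.inv_eq_iff_eq, hg₂d]]; exact hd
    · rw [show g₂⁻¹ x = x by rw [Equiv.Perm.inv_eq_iff_eq, hg₂fix x hx hxd hxf]]; exact hx
  -- conjugated cycles lie in C
  have hτC : ∀ g' : Perm α, g' ∈ G → (∀ x, x ∉ σ.support → g' x ∉ σ.support) →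
      (∀ x, x ∉ σ.support → g'⁻¹ x ∉ σ.support) → g' * σ * g'⁻¹ ∈ C := by
    intro g' hg'G hΔ hΔinv
    refine (hmemC _).2 ⟨G.mul_mem (G.mul_mem hg'G hσG) (G.inv_mem hg'G), ?_⟩
    intro x hx
    have h1 : g'⁻¹ x ∉ σ.support := hΔinv x hx
    simp only [Equiv.Perm.mul_apply]
    rw [notMem_support.1 h1, Equiv.Perm.apply_inv_self]
  have hτ₁C : g₁ * σ * g₁⁻¹ ∈ C := hτC g₁ hg₁G hg₁Δ hg₁inv
  have hτ₂C : g₂ * σ * g₂⁻¹ ∈ C := hτC g₂ hg₂G hg₂Δ hg₂inv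
  -- orders
  have horderσ : orderOf σ = q := hc.orderOf
  have horderconj : ∀ g' : Perm α, orderOf (g' * σ * g'⁻¹) = q := by
    intro g'
    rw [(hc.conj : IsCycle (g' * σ * g'⁻¹)).orderOf, card_support_conj]
  -- q² does not divide |Perm α|
  have hq2ndvd : ¬ (q ^ 2 ∣ Nat.card (Perm α)) := by
    rw [Nat.card_eq_fintype_card, Fintype.card_perm]
    intro hdvd
    have hlog : Nat.log q (Fintype.card α) < 2 := by
      apply Nat.log_lt_of_lt_pow
      · have := Fintype.card_pos_iff.2 ⟨d⟩
        omega
      · have : 2 * q ≤ q ^ 2 := by nlinarith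
        omega
    rw [hprime.pow_dvd_factorial_iff hlog] at hdvd
    have hIco : Finset.Ico 1 2 = {1} := rfl
    rw [hIco, Finset.sum_singleton, pow_one] at hdvd
    have hdivq : Fintype.card α / q = 1 := Nat.div_eq_of_lt_le (by omega) (by omega)
    omega
  have hcarddvd : ∀ (K : Subgroup ↥C), Nat.card ↥K ∣ Nat.card (Perm α) := by
    intro K
    exact dvd_trans (Subgroup.card_subgroup_dvd_card K) (Subgroup.card_subgroup_dvd_card C)
  -- every element of order q in C generates a Sylow subgroup
  have key : ∀ x : ↥C, orderOf x = q → ∃ Q : Sylow q ↥C, (Q : Subgroup ↥C) = Subgroup.zpowers x := by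
    intro x hx
    have hP : IsPGroup q (Subgroup.zpowers x) :=
      IsPGroup.of_card (by rw [Nat.card_zpowers, hx, pow_one])
    obtain ⟨Q, hQ⟩ := hP.exists_le_sylow
    refine ⟨Q, ?_⟩
    obtain ⟨s, hs⟩ := (IsPGroup.iff_card).1 Q.2
    have hdvd2 := hcarddvd Q
    rw [hs] at hdvd2
    have hsle : s ≤ 1 := by
      by_contra hcon
      exact hq2ndvd (dvd_trans (pow_dvd_pow q (by omega)) hdvd2)
    have hle := Subgroup.card_le_of_le hQ
    rw [Nat.card_zpowers, hx, hs] at hle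
    have hseq : s = 1 := by
      rcases Nat.eq_or_lt_of_le hsle with h | h
      · exact h
      · exfalso
        have : s = 0 := by omega
        rw [this, pow_zero] at hle
        omega
    exact (subgroup_eq_of_le_of_card_le hQ
      (by rw [Nat.card_zpowers, hx, hs, hseq, pow_one])).symm
  -- order of elements of C agrees with order in Perm α
  have hordC : ∀ x : ↥C, orderOf x = orderOf (x : Perm α) :=
    fun x => (orderOf_injective C.subtype (Subgroup.subtype_injective C) x).symm
  obtain ⟨Qσ, hQσ⟩ := key ⟨σ, hσC⟩ (by rw [hordC]; exact horderσ)
  obtain ⟨Q₁, hQ₁⟩ := key ⟨g₁ * σ * g₁⁻¹, hτ₁C⟩ (by rw [hordC]; exact horderconj g₁)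
  obtain ⟨Q₂, hQ₂⟩ := key ⟨g₂ * σ * g₂⁻¹, hτ₂C⟩ (by rw [hordC]; exact horderconj g₂)
  -- Sylow conjugacy
  haveI hfinsub : Finite (Subgroup ↥C) :=
    Finite.of_injective (fun (K : Subgroup ↥C) => (K : Set ↥C)) (fun _ _ h => SetLike.coe_injective h)
  haveI hfinsyl : Finite (Sylow q ↥C) :=
    Finite.of_injective (fun Q : Sylow q ↥C => Q.toSubgroup) (fun _ _ h => Sylow.ext h)
  have hconj : ∀ (τ : ↥C) (Qτ : Sylow q ↥C), (Qτ : Subgroup ↥C) = Subgroup.zpowers τ →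
      ∃ (t : ↥C) (m : ℤ), (t : Perm α) * (τ : Perm α) * (t : Perm α)⁻¹ = σ ^ m := by
    intro τ Qτ hQτ
    obtain ⟨t, ht⟩ := MulAction.exists_smul_eq (↥C) Qτ Qσ
    have hmem : τ ∈ (Qτ : Subgroup ↥C) := by rw [hQτ]; exact Subgroup.mem_zpowers τ
    have hmem2 : t * τ * t⁻¹ ∈ ((t • Qτ : Sylow q ↥C) : Subgroup ↥C) := by
      rw [Sylow.smul_def, Sylow.pointwise_smul_def]
      rw [Subgroup.mem_pointwise_smul_iff_inv_smul_mem]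
      have hsmul : (MulAut.conj t)⁻¹ • (t * τ * t⁻¹) = τ := by
        rw [← map_inv (MulAut.conj), MulAut.smul_def, MulAut.conj_apply]
        group
      rw [hsmul]
      exact hmem
    rw [ht, hQσ] at hmem2
    obtain ⟨m, hm⟩ := (Subgroup.mem_zpowers_iff).1 hmem2
    refine ⟨t, m, ?_⟩
    have hcg := congrArg (fun y : ↥C => (y : Perm α)) hm
    simpa [SubgroupClass.coe_zpow] using hcg.symm
  obtain ⟨t₁, m₁, hm₁⟩ := hconj ⟨g₁ * σ * g₁⁻¹, hτ₁C⟩ Q₁ hQ₁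
  obtain ⟨t₂, m₂, hm₂⟩ := hconj ⟨g₂ * σ * g₂⁻¹, hτ₂C⟩ Q₂ hQ₂
  -- define h₁, h₂
  set h₁ := (t₁ : Perm α) * g₁ with hh₁def
  set h₂ := (t₂ : Perm α) * g₂ with hh₂def
  have ht₁C : (t₁ : Perm α) ∈ C := t₁.2
  have ht₂C : (t₂ : Perm α) ∈ C := t₂.2
  have ht₁fix : ∀ x, x ∉ σ.support → (t₁ : Perm α) x = x := ((hmemC _).1 ht₁C).2
  have ht₂fix : ∀ x, x ∉ σ.support → (t₂ : Perm α) x = x := ((hmemC _).1 ht₂C).2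
  have hh₁G : h₁ ∈ G := G.mul_mem ((hmemC _).1 ht₁C).1 hg₁G
  have hh₂G : h₂ ∈ G := G.mul_mem ((hmemC _).1 ht₂C).1 hg₂G
  have hm₁x : (t₁ : Perm α) * (g₁ * σ * g₁⁻¹) * (t₁ : Perm α)⁻¹ = σ ^ m₁ := hm₁
  have hm₂x : (t₂ : Perm α) * (g₂ * σ * g₂⁻¹) * (t₂ : Perm α)⁻¹ = σ ^ m₂ := hm₂
  have hconj1 : h₁ * σ * h₁⁻¹ = σ ^ m₁ := by
    rw [hh₁def, ← hm₁x]
    group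
  have hconj2 : h₂ * σ * h₂⁻¹ = σ ^ m₂ := by
    rw [hh₂def, ← hm₂x]
    group
  -- h values on Δ
  have hh₁d : h₁ d = e := by rw [hh₁def, Equiv.Perm.mul_apply, hg₁d, ht₁fix e he]
  have hh₁e : h₁ e = d := by rw [hh₁def, Equiv.Perm.mul_apply, hg₁e, ht₁fix d hd]
  have hh₁fix : ∀ x, x ∉ σ.support → x ≠ d → x ≠ e → h₁ x = x := by
    intro x hx hxd hxe
    rw [hh₁def, Equiv.Perm.mul_apply, hg₁fix x hx hxd hxe, ht₁fix x hx]
  have hh₂d : h₂ d = f := by rw [hh₂def, Equiv.Perm.mul_apply, hg₂d, ht₂fix f hf]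
  have hh₂f : h₂ f = d := by rw [hh₂def, Equiv.Perm.mul_apply, hg₂f, ht₂fix d hd]
  have hh₂fix : ∀ x, x ∉ σ.support → x ≠ d → x ≠ f → h₂ x = x := by
    intro x hx hxd hxf
    rw [hh₂def, Equiv.Perm.mul_apply, hg₂fix x hx hxd hxf, ht₂fix x hx]
  -- inverse values
  have hh₁invd : h₁⁻¹ d = e := by rw [Equiv.Perm.inv_eq_iff_eq, hh₁e]
  have hh₁inve : h₁⁻¹ e = d := by rw [Equiv.Perm.inv_eq_iff_eq, hh₁d]
  have hh₁invfix : ∀ x, x ∉ σ.support → x ≠ d → x ≠ e → h₁⁻¹ x = x := by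
    intro x hx hxd hxe
    rw [Equiv.Perm.inv_eq_iff_eq, hh₁fix x hx hxd hxe]
  have hh₂invd : h₂⁻¹ d = f := by rw [Equiv.Perm.inv_eq_iff_eq, hh₂f]
  have hh₂invf : h₂⁻¹ f = d := by rw [Equiv.Perm.inv_eq_iff_eq, hh₂d]
  have hh₂invfix : ∀ x, x ∉ σ.support → x ≠ d → x ≠ f → h₂⁻¹ x = x := by
    intro x hx hxd hxf
    rw [Equiv.Perm.inv_eq_iff_eq, hh₂fix x hx hxd hxf]
  -- inverse-conjugation exponents
  have hzpow_inv : ∀ (h : Perm α) (m : ℤ), h * σ * h⁻¹ = σ ^ m →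
      ∃ m' : ℤ, h⁻¹ * σ * h = σ ^ m' ∧ σ ^ (m * m') = σ := by
    intro h m hm
    have hρσ : (h⁻¹ * σ * h) ^ m = σ := by
      have h1 : h⁻¹ * σ * h = (MulAut.conj h⁻¹) σ := by
        rw [MulAut.conj_apply]; group
      rw [h1, ← map_zpow, ← hm]
      rw [MulAut.conj_apply]
      group
    have hle : Subgroup.zpowers σ ≤ Subgroup.zpowers (h⁻¹ * σ * h) :=
      (Subgroup.zpowers_le).2 ((Subgroup.mem_zpowers_iff).2 ⟨m, hρσ⟩)
    have hcard : Nat.card ↥(Subgroup.zpowers (h⁻¹ * σ * h)) ≤ Nat.card ↥(Subgroup.zpowers σ) := by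
      rw [Nat.card_zpowers, Nat.card_zpowers, horderσ]
      have : h⁻¹ * σ * h = h⁻¹ * σ * h⁻¹⁻¹ := by rw [inv_inv]
      rw [this, horderconj h⁻¹]
    have heq := subgroup_eq_of_le_of_card_le hle hcard
    have hmem : h⁻¹ * σ * h ∈ Subgroup.zpowers σ := by
      rw [heq]; exact Subgroup.mem_zpowers _
    obtain ⟨m', hm'⟩ := (Subgroup.mem_zpowers_iff).1 hmem
    refine ⟨m', hm'.symm, ?_⟩
    rw [mul_comm, zpow_mul, hm', hρσ]
  obtain ⟨m₁', hm₁', hmm₁⟩ := hzpow_inv h₁ m₁ hconj1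
  obtain ⟨m₂', hm₂', hmm₂⟩ := hzpow_inv h₂ m₂ hconj2
  -- the commutator z
  set z := h₁ * h₂ * h₁⁻¹ * h₂⁻¹ with hzdef
  have hzG : z ∈ G := G.mul_mem (G.mul_mem (G.mul_mem hh₁G hh₂G) (G.inv_mem hh₁G)) (G.inv_mem hh₂G)
  have step : ∀ (h : Perm α) (m : ℤ), h * σ * h⁻¹ = σ ^ m →
      ∀ k : ℤ, h * σ ^ k * h⁻¹ = σ ^ (m * k) := by
    intro h m hm k
    have h2 : h * σ ^ k * h⁻¹ = (h * σ * h⁻¹) ^ k := by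
      rw [show h * σ * h⁻¹ = (MulAut.conj h) σ from (MulAut.conj_apply h σ).symm, ← map_zpow,
        MulAut.conj_apply]
    rw [h2, hm, ← zpow_mul]
  have hzσ : z * σ * z⁻¹ = σ := by
    have e1 : z * σ * z⁻¹
        = h₁ * (h₂ * (h₁⁻¹ * (h₂⁻¹ * σ * h₂) * h₁) * h₂⁻¹) * h₁⁻¹ := by
      rw [hzdef]; group
    have s2 : h₁⁻¹ * σ ^ m₂' * h₁ = σ ^ (m₁' * m₂') := by
      have := step h₁⁻¹ m₁' (by rw [inv_inv]; exact hm₁') m₂'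
      rwa [inv_inv] at this
    have s3 : h₂ * σ ^ (m₁' * m₂') * h₂⁻¹ = σ ^ (m₂ * (m₁' * m₂')) := step h₂ m₂ hconj2 _
    have s4 : h₁ * σ ^ (m₂ * (m₁' * m₂')) * h₁⁻¹ = σ ^ (m₁ * (m₂ * (m₁' * m₂'))) :=
      step h₁ m₁ hconj1 _
    rw [e1, hm₂', s2, s3, s4]
    -- now show σ ^ (m₁ * (m₂ * (m₁' * m₂'))) = σ
    have c1 : m₁ * m₁' ≡ 1 [ZMOD (q : ℕ)] := by
      have h3 := (zpow_eq_zpow_iff_modEq).1 (hmm₁.trans (zpow_one σ).symm)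
      rwa [horderσ] at h3
    have c2 : m₂ * m₂' ≡ 1 [ZMOD (q : ℕ)] := by
      have h3 := (zpow_eq_zpow_iff_modEq).1 (hmm₂.trans (zpow_one σ).symm)
      rwa [horderσ] at h3
    have c3' : m₁ * (m₂ * (m₁' * m₂')) ≡ 1 [ZMOD (q : ℕ)] := by
      have := c1.mul c2
      calc m₁ * (m₂ * (m₁' * m₂')) = (m₁ * m₁') * (m₂ * m₂') := by ring
      _ ≡ 1 * 1 [ZMOD (q : ℕ)] := this
      _ = 1 := by ring
    have : σ ^ (m₁ * (m₂ * (m₁' * m₂'))) = σ ^ (1 : ℤ) := by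
      rw [zpow_eq_zpow_iff_modEq, horderσ]
      exact c3'
    rw [this, zpow_one]
  -- z commutes with σ
  have hzs : z * σ = σ * z := by
    have h1 := hzσ
    rw [mul_inv_eq_iff_eq_mul] at h1
    exact h1
  have hcom : Commute z σ := hzs
  -- values of z on the fixed points
  have hzd : z d = e := by
    rw [hzdef]
    simp only [Equiv.Perm.mul_apply]
    rw [hh₂invd, hh₁invfix f hf hdf.symm hef.symm, hh₂f, hh₁d]
  have hze : z e = f := by
    rw [hzdef]
    simp only [Equiv.Perm.mul_apply]
    rw [hh₂invfix e he hde.symm hef, hh₁inve, hh₂d, hh₁fix f hf hdf.symm hef.symm]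
  have hzf : z f = d := by
    rw [hzdef]
    simp only [Equiv.Perm.mul_apply]
    rw [hh₂invf, hh₁invd, hh₂fix e he hde.symm hef, hh₁e]
  have hzother : ∀ x, x ∉ σ.support → x ≠ d → x ≠ e → x ≠ f → z x = x := by
    intro x hx hxd hxe hxf
    rw [hzdef]
    simp only [Equiv.Perm.mul_apply]
    rw [hh₂invfix x hx hxd hxf, hh₁invfix x hx hxd hxe, hh₂fix x hx hxd hxf,
      hh₁fix x hx hxd hxe]
  -- z acts as a power of σ on the support
  obtain ⟨x₀, hx₀⟩ := card_pos.1 (by omega : 0 < σ.support.card)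
  have hzx₀ : z x₀ ∈ σ.support := by
    rw [mem_support]
    intro hfixed
    have h1 : σ (z x₀) = z (σ x₀) := by
      have h0 := congrArg (fun p : Perm α => p x₀) hzs.symm
      simpa [Equiv.Perm.mul_apply] using h0
    have h2 : z (σ x₀) = z x₀ := by rw [← h1, hfixed]
    exact (mem_support.1 hx₀) (Equiv.injective z h2)
  obtain ⟨j, hj⟩ := hc.exists_pow_eq (mem_support.1 hx₀) (mem_support.1 hzx₀)
  have hzΓ : ∀ x ∈ σ.support, z x = (σ ^ j) x := by
    intro x hx
    obtain ⟨i, hi⟩ := hc.exists_pow_eq (mem_support.1 hx₀) (mem_support.1 hx)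
    have hcm : z * σ ^ i = σ ^ i * z := (hcom.pow_right i).eq
    have h1 : z ((σ ^ i) x₀) = (σ ^ i) (z x₀) := by
      have := congrArg (fun p : Perm α => p x₀) hcm
      simpa [Equiv.Perm.mul_apply] using this
    rw [← hi, h1, ← hj]
    have h2 : σ ^ i * σ ^ j = σ ^ j * σ ^ i := by
      rw [← pow_add, ← pow_add, Nat.add_comm]
    have := congrArg (fun p : Perm α => p x₀) h2
    simpa [Equiv.Perm.mul_apply] using this
  -- final identification
  have hfixinv : ∀ x, x ∉ σ.support → (σ ^ j)⁻¹ x = x := by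
    intro x hx
    rw [Equiv.Perm.inv_eq_iff_eq]
    exact (notMem_support.1 (fun h => hx (support_pow_le σ j h))).symm
  have hczeq : c3 d e f = (σ ^ j)⁻¹ * z := by
    ext x
    by_cases hxs : x ∈ σ.support
    · have hxd : x ≠ d := fun h => hd (h ▸ hxs)
      have hxe : x ≠ e := fun h => he (h ▸ hxs)
      have hxf : x ≠ f := fun h => hf (h ▸ hxs)
      rw [c3_apply_of_ne hxd hxe hxf, Equiv.Perm.mul_apply, hzΓ x hxs,
        Equiv.Perm.inv_apply_self]
    rcases eq_or_ne x d with rfl | hxd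
    · rw [c3_apply_left hde hdf, Equiv.Perm.mul_apply, hzd, hfixinv e he]
    rcases eq_or_ne x e with rfl | hxe
    · rw [c3_apply_mid hdf.symm hef.symm, Equiv.Perm.mul_apply, hze, hfixinv f hf]
    rcases eq_or_ne x f with rfl | hxf
    · rw [c3_apply_right, Equiv.Perm.mul_apply, hzf, hfixinv d hd]
    · rw [c3_apply_of_ne hxd hxe hxf, Equiv.Perm.mul_apply,
        hzother x hxs hxd hxe hxf, hfixinv x hxs]
  rw [hczeq]
  exact G.mul_mem (G.inv_mem (pow_mem hσG j)) hzG

end Stmt10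

open Stmt10 in
theorem stmt_10 (n : ℕ) (hn : 5 ≤ n) (G : Subgroup (Equiv.Perm (Fin n)))
    (htrans : ∀ a b : Fin n, ∃ σ ∈ G, σ a = b)
    (q : ℕ) (hq : q.Prime) (hq1 : n < 2 * q) (hq2 : q < n - 2)
    (hdvd : q ∣ Nat.card G) :
    alternatingGroup (Fin n) ≤ G := by
  classical
  haveI : Fact q.Prime := ⟨hq⟩
  have hq2le : 2 ≤ q := hq.two_le
  -- get an element of order q, which is a q-cycle
  have hdvd' : q ∣ Fintype.card G := by rwa [← Nat.card_eq_fintype_card]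
  obtain ⟨x, hx⟩ := exists_prime_orderOf_dvd_card q hdvd'
  set σ : Perm (Fin n) := (x : Perm (Fin n)) with hσdef
  have hσG : σ ∈ G := x.2
  have hordσ : orderOf σ = q := by
    have h0 : orderOf ((G.subtype) x) = orderOf x :=
      orderOf_injective G.subtype (Subgroup.subtype_injective G) x
    rw [hx] at h0
    exact h0
  have hN : Fintype.card (Fin n) = n := Fintype.card_fin n
  have hsupple : σ.support.card ≤ n := by
    have h0 := card_le_univ σ.support
    rwa [hN] at h0
  have hc : σ.IsCycle := by
    apply Equiv.Perm.isCycle_of_prime_order (by rw [hordσ]; exact hq)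
    rw [hordσ]
    omega
  have hcard : σ.support.card = q := by rw [← hordσ]; exact hc.orderOf.symm
  -- fixed-point set
  set Δ : Finset (Fin n) := σ.supportᶜ with hΔdef
  have hΔcard : Δ.card = n - q := by rw [hΔdef, card_compl, hcard, hN]
  have hk3 : 3 ≤ n - q := by omega
  -- pick three distinct fixed points
  obtain ⟨d, hdΔ⟩ := card_pos.1 (by omega : 0 < Δ.card)
  obtain ⟨e, heE⟩ := card_pos.1 (by rw [card_erase_of_mem hdΔ]; omega : 0 < (Δ.erase d).card)
  have heΔ : e ∈ Δ := mem_of_mem_erase heE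
  have hed : e ≠ d := (mem_erase.1 heE).1
  obtain ⟨f, hfE⟩ := card_pos.1 (by
    rw [card_erase_of_mem heE, card_erase_of_mem hdΔ]; omega :
    0 < ((Δ.erase d).erase e).card)
  have hfΔ : f ∈ Δ := mem_of_mem_erase (mem_of_mem_erase hfE)
  have hfe : f ≠ e := (mem_erase.1 hfE).1
  have hfd : f ≠ d := (mem_erase.1 (mem_of_mem_erase hfE)).1
  have hde : d ≠ e := hed.symm
  have hef : e ≠ f := hfe.symm
  have hdf : d ≠ f := hfd.symm
  have hd : d ∉ σ.support := Finset.mem_compl.1 hdΔ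
  have he : e ∉ σ.support := Finset.mem_compl.1 heΔ
  have hf : f ∉ σ.support := Finset.mem_compl.1 hfΔ
  -- transitivity machinery
  have httr := ttr G σ hσG hc (by rw [hcard]; exact hq) (by rw [hcard, hN]; omega) htrans
  -- realize a "transposition on Δ" swapping d with y for y ∈ {e, f}
  have realize : ∀ y : Fin n, y ∉ σ.support → y ≠ d →
      ∃ g : Perm (Fin n), g ∈ G ∧ g d = y ∧ g y = d ∧
        (∀ z : Fin n, z ∉ σ.support → z ≠ d → z ≠ y → g z = z) := by
    intro y hy hyd
    set F₁ : Finset (Fin n) := Δ \ {d, y} with hF₁def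
    have hsubdy : ({d, y} : Finset (Fin n)) ⊆ Δ := by
      intro s hs
      simp only [mem_insert, mem_singleton] at hs
      rcases hs with h' | h' <;> rw [h']
      · exact hdΔ
      · exact Finset.mem_compl.2 hy
    have hF₁card : F₁.card = n - q - 2 := by
      rw [hF₁def, card_sdiff_of_subset hsubdy, hΔcard,
        card_insert_of_notMem (by simp [hyd.symm]), card_singleton]
    have hdF₁ : d ∉ F₁ := by simp [hF₁def]
    have hyF₁ : y ∉ F₁ := by simp [hF₁def]
    obtain ⟨ga, hgaG, hgafix, hgad⟩ := (httr (n - q - 2)).2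
      (by rw [hcard, hN]; omega) F₁ hF₁card d y hdF₁ hyF₁
    have hgay_ne : ga y ≠ y := by
      intro hcon
      exact hyd (Equiv.injective ga (by rw [hgad, hcon]))
    have hgayF₁ : ga y ∉ F₁ := by
      intro hcon
      exact hgay_ne (Equiv.injective ga (hgafix (ga y) hcon))
    have hyiF₁card : (insert y F₁).card = n - q - 1 := by
      rw [card_insert_of_notMem hyF₁, hF₁card]
      omega
    have hgay_notin : ga y ∉ insert y F₁ := by
      simp only [mem_insert]
      push_neg
      exact ⟨hgay_ne, hgayF₁⟩
    have hd_notin : d ∉ insert y F₁ := by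
      simp only [mem_insert]
      push_neg
      exact ⟨hyd.symm, hdF₁⟩
    obtain ⟨gb, hgbG, hgbfix, hgbval⟩ := (httr (n - q - 1)).2
      (by rw [hcard, hN]; omega) (insert y F₁) hyiF₁card (ga y) d hgay_notin hd_notin
    refine ⟨gb * ga, G.mul_mem hgbG hgaG, ?_, ?_, ?_⟩
    · rw [Equiv.Perm.mul_apply, hgad, hgbfix y (mem_insert_self y F₁)]
    · rw [Equiv.Perm.mul_apply, hgbval]
    · intro z hz hzd hzy
      have hzF₁ : z ∈ F₁ := by
        rw [hF₁def, mem_sdiff]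
        refine ⟨Finset.mem_compl.2 hz, ?_⟩
        simp only [mem_insert, mem_singleton]
        push_neg
        exact ⟨hzd, hzy⟩
      rw [Equiv.Perm.mul_apply, hgafix z hzF₁, hgbfix z (mem_insert_of_mem hzF₁)]
  obtain ⟨g₁, hg₁G, hg₁d, hg₁e, hg₁fix⟩ := realize e he hed
  obtain ⟨g₂, hg₂G, hg₂d, hg₂f, hg₂fix⟩ := realize f hf hfd
  -- produce the 3-cycle (d e f)
  have hc3def : c3 d e f ∈ G :=
    endgame G σ hσG hc (by rw [hcard]; exact hq) (by rw [hcard, hN]; omega)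
      d e f hd he hf hde hef hdf
      g₁ hg₁G hg₁d hg₁e (fun z hz hzd hze => hg₁fix z hz hzd hze)
      g₂ hg₂G hg₂d hg₂f (fun z hz hzd hzf => hg₂fix z hz hzd hzf)
  -- grow to all 3-cycles
  have hT2 : ∀ F : Finset (Fin n), F.card = 2 → ∀ u v : Fin n, u ∉ F → v ∉ F →
      ∃ g ∈ G, (∀ z ∈ F, g z = z) ∧ g u = v :=
    fun F hF u v hu hv => (httr 2).2 (by rw [hcard, hN]; omega) F hF u v hu hv
  have hPdef : Pgen G {d, e, f} := Pgen_of_c3 G hde hef hdf hc3def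
  have hPuniv : Pgen G (univ : Finset (Fin n)) :=
    Pgen_univ G hT2 (by rw [card_triple hde hef hdf]) hPdef
  -- conclude
  rw [← Equiv.Perm.closure_three_cycles_eq_alternating, Subgroup.closure_le]
  intro τ hτ
  have hτ3 : τ.IsThreeCycle := hτ
  obtain ⟨a, b, c, hab, hbc, hac, rfl⟩ := isThreeCycle_c3 hτ3
  exact hPuniv a b c (mem_univ a) (mem_univ b) (mem_univ c) hab hbc hac
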